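/- Let G be a group which does not satisfy the Følner condition (for its left action on itself). Then G admits a paradoxical decomposition: there exist a finite K ⊆ G and families (A_k)_{k∈K}, (B_k)_{k∈K} of subsets of G with G = ⊔_{k∈K} A_k = ⊔_{k∈K} B_k = (⊔_{k∈K} kA_k) ⊔ (⊔_{k∈K} kB_k). Moreover K can be taken of the form (K₀ ∪ K₀⁻¹ ∪ {1})^{n₁} where K₀ and n witness the failure of the Følner condition and (1+1/n)^{n₁} ≥ 3. -/

import Mathlib

open Pointwise Function

lemma sb_rel {α β : Type*} [Nonempty β] (r : α → β → Prop) (f : α → β) (g : β → α)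
    (hf : Injective f) (hg : Injective g)
    (hrf : ∀ a, r a (f a)) (hrg : ∀ b, r (g b) b) :
    ∃ h : α → β, Bijective h ∧ ∀ a, r a (h a) := by
  classical
  set F : Set α →o Set α :=
    ⟨fun S => (g '' (f '' S)ᶜ)ᶜ, by
      intro S T hST
      exact Set.compl_subset_compl.2 (Set.image_mono (Set.compl_subset_compl.2
        (Set.image_mono hST)))⟩
    with hF
  set S : Set α := OrderHom.lfp F with hS
  have hfix : (g '' (f '' S)ᶜ)ᶜ = S := OrderHom.map_lfp F
  have hcompl : Sᶜ = g '' (f '' S)ᶜ := by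
    conv_lhs => rw [← hfix]
    rw [compl_compl]
  refine ⟨fun a => if a ∈ S then f a else invFun g a, ?_, ?_⟩
  · constructor
    · intro a₁ a₂ h
      by_cases h1 : a₁ ∈ S <;> by_cases h2 : a₂ ∈ S <;> simp only [h1, h2, if_pos, if_neg,
        if_true, if_false] at h
      · exact hf h
      · exfalso
        have ha2 : a₂ ∈ g '' (f '' S)ᶜ := by rw [← hcompl]; exact h2
        obtain ⟨b, hb, rfl⟩ := ha2
        rw [leftInverse_invFun hg b] at h
        exact hb ⟨a₁, h1, h⟩
      · exfalso
        have ha1 : a₁ ∈ g '' (f '' S)ᶜ := by rw [← hcompl]; exact h1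
        obtain ⟨b, hb, rfl⟩ := ha1
        rw [leftInverse_invFun hg b] at h
        exact hb ⟨a₂, h2, h.symm⟩
      · have ha1 : a₁ ∈ g '' (f '' S)ᶜ := by rw [← hcompl]; exact h1
        have ha2 : a₂ ∈ g '' (f '' S)ᶜ := by rw [← hcompl]; exact h2
        obtain ⟨b₁, hb₁, rfl⟩ := ha1
        obtain ⟨b₂, hb₂, rfl⟩ := ha2
        rw [leftInverse_invFun hg b₁, leftInverse_invFun hg b₂] at h
        rw [h]
    · intro b
      by_cases hb : b ∈ f '' S
      · obtain ⟨a, ha, rfl⟩ := hb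
        exact ⟨a, by simp [ha]⟩
      · have hgb : g b ∈ Sᶜ := by rw [hcompl]; exact ⟨b, hb, rfl⟩
        exact ⟨g b, by simp [Set.notMem_of_mem_compl hgb, leftInverse_invFun hg b]⟩
  · intro a
    by_cases ha : a ∈ S
    · simpa [ha] using hrf a
    · have : a ∈ g '' (f '' S)ᶜ := by rw [← hcompl]; exact ha
      obtain ⟨b, hb, rfl⟩ := this
      have hgb : g b ∉ S := by
        have : g b ∈ Sᶜ := by rw [hcompl]; exact Set.mem_image_of_mem g hb
        exact this
      simpa [hgb, leftInverse_invFun hg b] using hrg b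


/-- A paradoxical decomposition of the `G`-space `X`. -/
def ParadoxicalDecomposition {G X : Type*} [Group G] [MulAction G X]
    (K : Set G) (A B : G → Set X) : Prop :=
  (∀ x : X, ∃! k : G, k ∈ K ∧ x ∈ A k) ∧
  (∀ x : X, ∃! k : G, k ∈ K ∧ x ∈ B k) ∧
  (∀ x : X, ∃! p : G × Bool, p.1 ∈ K ∧
    x ∈ (if p.2 then p.1 • A p.1 else p.1 • B p.1))

/-- A group `G` failing the Følner condition (witnessed by a finite `K₀` and `n`) admits
a paradoxical decomposition with respect to `K = (K₀ ∪ K₀⁻¹ ∪ {1})^{n₁}`, where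
`(1+1/n)^{n₁} ≥ 3`. -/
theorem group_paradoxical_of_not_folner {G : Type*} [Group G]
    (K₀ : Finset G) (n n₁ : ℕ) (hn : 0 < n)
    (hn₁ : 3 * n ^ n₁ ≤ (n + 1) ^ n₁)
    (hfol : ∀ F : Set G, F.Finite → F.Nonempty →
        ∃ k ∈ K₀, F.ncard ≤ n * (F \ k • F).ncard) :
    ∃ A B : G → Set G,
      ParadoxicalDecomposition (((K₀ : Set G) ∪ (K₀ : Set G)⁻¹ ∪ {1}) ^ n₁) A B := by
  classical
  set Sset : Set G := (K₀ : Set G) ∪ (K₀ : Set G)⁻¹ ∪ {1} with hSset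
  have hSfin : Sset.Finite :=
    ((K₀.finite_toSet.union K₀.finite_toSet.inv).union (Set.finite_singleton 1))
  have h1S : (1 : G) ∈ Sset := Or.inr rfl
  have h1pow : ∀ m : ℕ, (1 : G) ∈ Sset ^ m := by
    intro m
    induction m with
    | zero => simp [Set.mem_one]
    | succ j ih => rw [pow_succ]; simpa using Set.mul_mem_mul ih h1S
  have hpowfin : ∀ m : ℕ, (Sset ^ m).Finite := by
    intro m
    induction m with
    | zero => simp only [pow_zero]; exact Set.finite_one
    | succ j ih => rw [pow_succ]; exact ih.mul hSfin
  -- one-step growth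
  have key : ∀ F : Set G, F.Finite → F.Nonempty →
      (n + 1) * F.ncard ≤ n * (Sset * F).ncard := by
    intro F hF hFne
    obtain ⟨k, hk, hcard⟩ := hfol F hF hFne
    have hkS : k ∈ Sset := Or.inl (Or.inl hk)
    have hsub : F ∪ k • F ⊆ Sset * F := by
      rintro x (hx | hx)
      · exact ⟨1, h1S, x, hx, one_mul x⟩
      · obtain ⟨y, hy, rfl⟩ := hx
        exact ⟨k, hkS, y, hy, rfl⟩
    have hkF_fin : (k • F).Finite := hF.smul_set
    have hunion : (F ∪ k • F).ncard = F.ncard + (F \ k • F).ncard := by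
      have : F ∪ k • F = (k • F) ∪ (F \ k • F) := by
        rw [Set.union_diff_self, Set.union_comm]
      rw [this, Set.ncard_union_eq Set.disjoint_sdiff_right hkF_fin hF.diff,
        Set.ncard_smul_set]
    have hle : (F ∪ k • F).ncard ≤ (Sset * F).ncard :=
      Set.ncard_le_ncard hsub (hSfin.mul hF)
    calc (n + 1) * F.ncard = n * F.ncard + F.ncard := by ring
      _ ≤ n * F.ncard + n * (F \ k • F).ncard := Nat.add_le_add_left hcard _
      _ = n * (F.ncard + (F \ k • F).ncard) := by ring
      _ = n * (F ∪ k • F).ncard := by rw [hunion]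
      _ ≤ n * (Sset * F).ncard := Nat.mul_le_mul_left n hle
  -- iterated growth
  have pow_key : ∀ (j : ℕ) (F : Set G), F.Finite → F.Nonempty →
      (n + 1) ^ j * F.ncard ≤ n ^ j * (Sset ^ j * F).ncard := by
    intro j
    induction j with
    | zero => intro F hF hFne; simp
    | succ j ih =>
      intro F hF hFne
      have hSF_fin : (Sset * F).Finite := hSfin.mul hF
      have hSF_ne : (Sset * F).Nonempty := Set.Nonempty.mul ⟨1, h1S⟩ hFne
      have step := key F hF hFne
      have iter := ih (Sset * F) hSF_fin hSF_ne
      have hassoc : Sset ^ j * (Sset * F) = Sset ^ (j + 1) * F := by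
        rw [pow_succ, mul_assoc]
      calc (n + 1) ^ (j + 1) * F.ncard = (n + 1) ^ j * ((n + 1) * F.ncard) := by ring
        _ ≤ (n + 1) ^ j * (n * (Sset * F).ncard) := Nat.mul_le_mul_left _ step
        _ = n * ((n + 1) ^ j * (Sset * F).ncard) := by ring
        _ ≤ n * (n ^ j * (Sset ^ j * (Sset * F)).ncard) := Nat.mul_le_mul_left _ iter
        _ = n ^ (j + 1) * (Sset ^ j * (Sset * F)).ncard := by ring
        _ = n ^ (j + 1) * (Sset ^ (j + 1) * F).ncard := by rw [hassoc]
  have key3 : ∀ F : Set G, F.Finite → F.Nonempty →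
      3 * F.ncard ≤ (Sset ^ n₁ * F).ncard := by
    intro F hF hFne
    have h1 := pow_key n₁ F hF hFne
    have hpos : 0 < n ^ n₁ := Nat.pow_pos hn
    have : n ^ n₁ * (3 * F.ncard) ≤ n ^ n₁ * (Sset ^ n₁ * F).ncard := by
      calc n ^ n₁ * (3 * F.ncard) = (3 * n ^ n₁) * F.ncard := by ring
        _ ≤ (n + 1) ^ n₁ * F.ncard := Nat.mul_le_mul_right _ hn₁
        _ ≤ n ^ n₁ * (Sset ^ n₁ * F).ncard := h1
    exact Nat.le_of_mul_le_mul_left this hpos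
  -- Hall setup
  set Kf : Finset G := (hpowfin n₁).toFinset with hKf
  have hKfmem : ∀ k : G, k ∈ Kf ↔ k ∈ Sset ^ n₁ := fun k => Set.Finite.mem_toFinset _
  set t : G × Bool → Finset G := fun p => Kf.image (fun k => k * p.1) with ht
  have hall1 : ∀ s : Finset (G × Bool), s.card ≤ (s.biUnion t).card := by
    intro s
    rcases s.eq_empty_or_nonempty with rfl | hsne
    · simp
    set F : Finset G := s.image Prod.fst with hFdef
    have hFne : F.Nonempty := hsne.image _
    have hcard1 : s.card ≤ 2 * F.card := by
      have hsub : s ⊆ F ×ˢ (Finset.univ : Finset Bool) := by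
        intro p hp
        rw [Finset.mem_product]
        exact ⟨Finset.mem_image_of_mem _ hp, Finset.mem_univ _⟩
      calc s.card ≤ (F ×ˢ (Finset.univ : Finset Bool)).card := Finset.card_le_card hsub
        _ = F.card * 2 := by rw [Finset.card_product]; simp
        _ = 2 * F.card := by ring
    have hsub2 : Sset ^ n₁ * (F : Set G) ⊆ (s.biUnion t : Set G) := by
      rintro z ⟨k, hk, x, hx, rfl⟩
      have hx' : x ∈ F := hx
      rw [hFdef, Finset.mem_image] at hx'
      obtain ⟨p, hp, rfl⟩ := hx'
      show k * p.1 ∈ (↑(s.biUnion t) : Set G)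
      rw [Finset.mem_coe, Finset.mem_biUnion]
      exact ⟨p, hp, Finset.mem_image.2 ⟨k, (hKfmem k).2 hk, rfl⟩⟩
    have hcard2 : (Sset ^ n₁ * (F : Set G)).ncard ≤ (s.biUnion t).card := by
      rw [← Set.ncard_coe_finset (s.biUnion t)]
      exact Set.ncard_le_ncard hsub2 (s.biUnion t).finite_toSet
    have hcard3 : 3 * F.card ≤ (Sset ^ n₁ * (F : Set G)).ncard := by
      have := key3 (F : Set G) F.finite_toSet (by exact_mod_cast hFne)
      rwa [Set.ncard_coe_finset] at this
    omega
  set t' : G → Finset (G × Bool) :=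
    fun y => (Kf.image fun k => k⁻¹ * y) ×ˢ (Finset.univ : Finset Bool) with ht'
  have hall2 : ∀ s : Finset G, s.card ≤ (s.biUnion t').card := by
    intro s
    have hinj : Injective (fun y : G => (y, true)) := fun a b h => (Prod.mk.injEq _ _ _ _ ▸ h).1
    have hsub : s.image (fun y => (y, true)) ⊆ s.biUnion t' := by
      intro p hp
      rw [Finset.mem_image] at hp
      obtain ⟨y, hy, rfl⟩ := hp
      rw [Finset.mem_biUnion]
      refine ⟨y, hy, ?_⟩
      rw [Finset.mem_product]
      exact ⟨Finset.mem_image.2 ⟨1, (hKfmem 1).2 (h1pow n₁), by simp⟩, Finset.mem_univ _⟩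
    calc s.card = (s.image (fun y => (y, true))).card :=
          (Finset.card_image_of_injective s hinj).symm
      _ ≤ (s.biUnion t').card := Finset.card_le_card hsub
  obtain ⟨f, hfinj, hft⟩ := (Finset.all_card_le_biUnion_card_iff_exists_injective t).1 hall1
  obtain ⟨g, hginj, hgt⟩ := (Finset.all_card_le_biUnion_card_iff_exists_injective t').1 hall2
  set r : G × Bool → G → Prop := fun p y => y * p.1⁻¹ ∈ Sset ^ n₁ with hr
  have hrf : ∀ p, r p (f p) := by
    intro p
    have := hft p
    simp only [ht, Finset.mem_image] at this
    obtain ⟨k, hk, hfp⟩ := this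
    rw [hr]
    simp only [← hfp, mul_inv_cancel_right]
    exact (hKfmem k).1 hk
  have hrg : ∀ y, r (g y) y := by
    intro y
    have := hgt y
    simp only [ht', Finset.mem_product, Finset.mem_image] at this
    obtain ⟨⟨k, hk, hgy⟩, -⟩ := this
    show y * (g y).1⁻¹ ∈ Sset ^ n₁
    rw [← hgy]
    simpa using (hKfmem k).1 hk
  obtain ⟨h, hbij, hrel⟩ := sb_rel r f g hfinj hginj hrf hrg
  -- define the decomposition
  refine ⟨fun k => {x | h (x, true) = k * x}, fun k => {x | h (x, false) = k * x}, ?_, ?_, ?_⟩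
  · intro x
    refine ⟨h (x, true) * x⁻¹, ⟨hrel (x, true), by simp⟩, ?_⟩
    rintro k ⟨-, hkA⟩
    rw [Set.mem_setOf_eq] at hkA
    rw [hkA]
    group
  · intro x
    refine ⟨h (x, false) * x⁻¹, ⟨hrel (x, false), by simp⟩, ?_⟩
    rintro k ⟨-, hkA⟩
    rw [Set.mem_setOf_eq] at hkA
    rw [hkA]
    group
  · intro x
    obtain ⟨⟨y, i⟩, hy⟩ := hbij.2 x
    have hkK : x * y⁻¹ ∈ Sset ^ n₁ := by
      have := hrel (y, i)
      rwa [hy] at this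
    refine ⟨(x * y⁻¹, i), ⟨hkK, ?_⟩, ?_⟩
    · cases i with
      | true =>
        simp only [if_true]
        rw [Set.mem_smul_set_iff_inv_smul_mem]
        show h ((x * y⁻¹)⁻¹ • x, true) = (x * y⁻¹) * ((x * y⁻¹)⁻¹ • x)
        have h1 : (x * y⁻¹)⁻¹ • x = y := by
          simp [smul_eq_mul, mul_assoc]
        rw [h1, hy]
        group
      | false =>
        simp only [Bool.false_eq_true, if_false]
        rw [Set.mem_smul_set_iff_inv_smul_mem]
        show h ((x * y⁻¹)⁻¹ • x, false) = (x * y⁻¹) * ((x * y⁻¹)⁻¹ • x)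
        have h1 : (x * y⁻¹)⁻¹ • x = y := by
          simp [smul_eq_mul, mul_assoc]
        rw [h1, hy]
        group
    · rintro ⟨k, b⟩ ⟨-, hmem⟩
      have hkey : h (k⁻¹ * x, b) = x := by
        cases b with
        | true =>
          simp only [if_true] at hmem
          rw [Set.mem_smul_set_iff_inv_smul_mem] at hmem
          have : h (k⁻¹ • x, true) = k * (k⁻¹ • x) := hmem
          rw [smul_eq_mul] at this
          rw [this]
          group
        | false =>
          simp only [Bool.false_eq_true, if_false] at hmem
          rw [Set.mem_smul_set_iff_inv_smul_mem] at hmem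
          have : h (k⁻¹ • x, false) = k * (k⁻¹ • x) := hmem
          rw [smul_eq_mul] at this
          rw [this]
          group
      have := hbij.1 (hkey.trans hy.symm)
      have h2 : k⁻¹ * x = y ∧ b = i := Prod.mk.injEq _ _ _ _ ▸ this
      obtain ⟨h3, h4⟩ := h2
      have hk : k = x * y⁻¹ := by
        rw [← h3]; group
      rw [hk, h4]
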